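/- Let P be a Pellian polynomial of even degree d ≥ 1, and let a ∈ [0,1] satisfy a ≤ sin(π/(2d)). Then |P(a)| ≥ |T_d(a)|. -/

import Mathlib

set_option maxHeartbeats 1000000
open Polynomial Finset Real Set Complex
lemma natDegree_U_le (n : ℕ) : (Polynomial.Chebyshev.U ℝ n).natDegree ≤ n := by
  induction n using Nat.strong_induction_on with
  | _ n ih =>
    match n with
    | 0 => simp
    | 1 => simpa using natDegree_mul_le.trans (by simp [natDegree_X_le])
    | (k+2) =>
      have h := Polynomial.Chebyshev.U_add_two ℝ k
      have hc : ((k:ℤ) + 2) = ((k+2 : ℕ) : ℤ) := by push_cast; ring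
      rw [hc] at h
      rw [h]
      refine natDegree_sub_le _ _ |>.trans ?_
      have h2X : ((2:ℝ[X]) * X).natDegree ≤ 1 := natDegree_mul_le.trans (by simp [natDegree_X_le])
      have h1 : ((2:ℝ[X]) * X * Polynomial.Chebyshev.U ℝ ((k:ℤ)+1)).natDegree ≤ k+2 := by
        refine natDegree_mul_le.trans ?_
        have := ih (k+1) (by omega)
        have hc1 : ((k:ℤ) + 1) = ((k+1 : ℕ) : ℤ) := by push_cast; ring
        rw [hc1]
        omega
      have h2 := (ih k (by omega)).trans (by omega : k ≤ k+2)
      simp only [sup_le_iff]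
      exact ⟨h1, h2⟩
noncomputable def pconj (P : ℂ[X]) : ℂ[X] := P.map (starRingEnd ℂ)

lemma eval_pconj (P : ℂ[X]) (z : ℂ) : (pconj P).eval z = starRingEnd ℂ (P.eval (starRingEnd ℂ z)) := by
  rw [pconj, eval_map]
  have := Polynomial.hom_eval₂ P (RingHom.id ℂ) (starRingEnd ℂ) (starRingEnd ℂ z)
  simpa using this.symm

lemma natDegree_pconj (P : ℂ[X]) : (pconj P).natDegree = P.natDegree :=
  Polynomial.natDegree_map_eq_of_injective (RingHom.injective _) P

lemma pconj_eq_zero {P : ℂ[X]} (h : pconj P = 0) : P = 0 := by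
  have := Polynomial.map_injective (starRingEnd ℂ) (RingHom.injective _)
  apply this; simpa [pconj] using h

lemma pell_poly (P Q : ℂ[X])
    (hpell : ∀ x : ℝ, x ∈ Set.Icc (-1 : ℝ) 1 →
      ‖P.eval (x : ℂ)‖ ^ 2 + (1 - x ^ 2) * ‖Q.eval (x : ℂ)‖ ^ 2 = 1) :
    P * pconj P + (1 - X^2) * (Q * pconj Q) = 1 := by
  apply Polynomial.eq_of_infinite_eval_eq
  apply Set.Infinite.mono (s := (fun x : ℝ => (x:ℂ)) '' (Set.Icc (-1) 1))
  · rintro z ⟨x, hx, rfl⟩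
    have h := hpell x hx
    have e1 : (P.eval (x:ℂ)) * (pconj P).eval (x:ℂ) = ((‖P.eval (x:ℂ)‖)^2 : ℝ) := by
      rw [eval_pconj]
      simp only [Complex.conj_ofReal]
      rw [Complex.mul_conj]
      simp [Complex.sq_norm]
    have e2 : (Q.eval (x:ℂ)) * (pconj Q).eval (x:ℂ) = ((‖Q.eval (x:ℂ)‖)^2 : ℝ) := by
      rw [eval_pconj]
      simp only [Complex.conj_ofReal]
      rw [Complex.mul_conj]
      simp [Complex.sq_norm]
    simp only [Set.mem_setOf_eq, eval_add, eval_mul, eval_one, eval_sub, eval_pow, eval_X, e1, e2]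
    have := congrArg (fun r : ℝ => (r : ℂ)) h
    push_cast at this ⊢
    linear_combination this
  · apply Set.Infinite.image
    · exact fun a _ b _ h => by exact_mod_cast h
    · exact Set.Icc_infinite (by norm_num : (-1:ℝ) < 1)
lemma pconj_ne_zero {P : ℂ[X]} (h : P ≠ 0) : pconj P ≠ 0 := by
  intro h0
  exact h (Polynomial.map_injective (starRingEnd ℂ) (RingHom.injective _) (by simpa [pconj] using h0))

lemma natDegree_Q_le (P Q : ℂ[X])
    (hid : P * pconj P + (1 - X^2) * (Q * pconj Q) = 1)
    (hP : 1 ≤ P.natDegree) : Q.natDegree + 1 ≤ P.natDegree := by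
  rcases eq_or_ne Q 0 with rfl | hQ
  · simpa using hP
  have hPne : P ≠ 0 := by
    intro h; rw [h] at hP; simp at hP
  have hA : (P * pconj P).natDegree = 2 * P.natDegree := by
    rw [natDegree_mul hPne (pconj_ne_zero hPne), natDegree_pconj]; ring
  have hB : (Q * pconj Q).natDegree = 2 * Q.natDegree := by
    rw [natDegree_mul hQ (pconj_ne_zero hQ), natDegree_pconj]; ring
  have hid2 : P * pconj P - 1 = (X^2 - 1) * (Q * pconj Q) := by linear_combination hid
  have hX2 : ((X:ℂ[X])^2 - 1).natDegree = 2 := by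
    simpa using natDegree_X_pow_sub_C (n := 2) (r := (1:ℂ))
  have hXne : ((X:ℂ[X])^2 - 1) ≠ 0 := by
    intro h
    have := congrArg natDegree h
    rw [hX2] at this; simp at this
  have hL : (P * pconj P - 1).natDegree = 2 * P.natDegree := by
    rw [show (1 : ℂ[X]) = C 1 by simp, natDegree_sub_C, hA]
  have hR : ((X^2 - 1) * (Q * pconj Q)).natDegree = 2 + 2 * Q.natDegree := by
    rw [natDegree_mul hXne (mul_ne_zero hQ (pconj_ne_zero hQ)), hX2, hB]
  rw [hid2, hR] at hL
  omega

lemma odd_natDegree_odd (P : ℂ[X]) (h : ∀ x : ℂ, P.eval (-x) = -P.eval x) (hne : P ≠ 0) :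
    Odd P.natDegree := by
  have hcomp : P.comp (-X) = -P := by
    apply Polynomial.funext
    intro r
    simp [eval_comp, h r]
  have hlc := Polynomial.leadingCoeff_comp (p := P) (q := -X) (by simp)
  rw [hcomp] at hlc
  simp only [leadingCoeff_neg, leadingCoeff_X] at hlc
  have hPlc : P.leadingCoeff ≠ 0 := leadingCoeff_ne_zero.mpr hne
  rcases Nat.even_or_odd P.natDegree with he | ho
  · exfalso
    rw [he.neg_one_pow] at hlc
    rw [mul_one] at hlc
    exact hPlc (by linear_combination (-1/2 : ℂ) * hlc)
  · exact ho

lemma odd_interp {K : Type*} [Field K] (m : ℕ) (v : ℕ → K)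
    (hinj : ∀ j < m, ∀ k < m, v j = v k → j = k)
    (hne2 : ∀ j < m, ∀ k < m, v j ≠ -v k)
    (F : K[X]) (hdeg : F.natDegree < 2 * m)
    (hodd : ∀ j < m, F.eval (-(v j)) = -F.eval (v j)) (a : K) :
    F.eval a = ∑ j ∈ Finset.range m, F.eval (v j) * (v j)⁻¹ * a *
      ∏ k ∈ (Finset.range m).erase j, ((v j ^ 2 - v k ^ 2)⁻¹ * (a ^ 2 - v k ^ 2)) := by
  rcases Nat.eq_zero_or_pos m with rfl | hm
  · exact absurd hdeg (by omega)
  have hv0 : ∀ j < m, v j ≠ 0 := by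
    intro j hj h0
    exact hne2 j hj j hj (by rw [h0]; ring)
  have husq : ∀ j < m, ∀ k < m, j ≠ k → v j ^ 2 - v k ^ 2 ≠ 0 := by
    intro j hj k hk hjk h0
    have : (v j - v k) * (v j + v k) = 0 := by linear_combination h0
    rcases mul_eq_zero.mp this with h | h
    · exact hjk (hinj j hj k hk (sub_eq_zero.mp h))
    · exact hne2 j hj k hk (eq_neg_of_add_eq_zero_left h)
  -- the interpolating polynomial
  set H : K[X] := ∑ j ∈ Finset.range m, C (F.eval (v j) * (v j)⁻¹) * X *
      ∏ k ∈ (Finset.range m).erase j, (C ((v j ^ 2 - v k ^ 2)⁻¹) * (X ^ 2 - C (v k ^ 2))) with hH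
  have hHeval : ∀ t : K, H.eval t = ∑ j ∈ Finset.range m, F.eval (v j) * (v j)⁻¹ * t *
      ∏ k ∈ (Finset.range m).erase j, ((v j ^ 2 - v k ^ 2)⁻¹ * (t ^ 2 - v k ^ 2)) := by
    intro t
    rw [hH, eval_finset_sum]
    refine Finset.sum_congr rfl fun j hj => ?_
    rw [eval_mul, eval_mul, eval_C, eval_X, eval_prod]
    refine congrArg _ (Finset.prod_congr rfl fun k hk => ?_)
    simp
  have hHnode : ∀ i < m, H.eval (v i) = F.eval (v i) := by
    intro i hi
    rw [hHeval]
    rw [Finset.sum_eq_single i]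
    · rw [Finset.prod_congr rfl (fun k hk => ?_), Finset.prod_const_one]
      · field_simp [hv0 i hi]
      · have hk' := Finset.mem_erase.mp hk
        have hkm := Finset.mem_range.mp hk'.2
        rw [inv_mul_cancel₀ (husq i hi k hkm (Ne.symm hk'.1))]
    · intro j hj hji
      have hjm := Finset.mem_range.mp hj
      have : ∏ k ∈ (Finset.range m).erase j, ((v j ^ 2 - v k ^ 2)⁻¹ * (v i ^ 2 - v k ^ 2)) = 0 := by
        apply Finset.prod_eq_zero (i := i)
        · exact Finset.mem_erase.mpr ⟨fun h => hji h.symm, Finset.mem_range.mpr hi⟩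
        · simp
      rw [this, mul_zero]
    · intro h; exact absurd (Finset.mem_range.mpr hi) h
  have hHodd : ∀ t : K, H.eval (-t) = -H.eval t := by
    intro t
    rw [hHeval, hHeval, ← Finset.sum_neg_distrib]
    refine Finset.sum_congr rfl fun j hj => ?_
    rw [show (-t)^2 = t^2 by ring]
    ring
  have hHdeg : H.natDegree < 2 * m := by
    rw [hH]
    refine lt_of_le_of_lt (Polynomial.natDegree_sum_le _ _) ?_
    rw [Finset.fold_max_lt]
    constructor
    · omega
    intro j hj
    have h1 : (C (F.eval (v j) * (v j)⁻¹) * X).natDegree ≤ 1 :=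
      natDegree_mul_le.trans (by rw [natDegree_C, natDegree_X])
    have h2 : (∏ k ∈ (Finset.range m).erase j,
        (C ((v j ^ 2 - v k ^ 2)⁻¹) * (X ^ 2 - C (v k ^ 2)))).natDegree ≤ 2 * (m - 1) := by
      refine (Polynomial.natDegree_prod_le _ _).trans ?_
      have : ∀ k ∈ (Finset.range m).erase j,
          (C ((v j ^ 2 - v k ^ 2)⁻¹) * (X ^ 2 - C (v k ^ 2))).natDegree ≤ 2 := by
        intro k hk
        refine natDegree_mul_le.trans ?_
        have : ((X:K[X]) ^ 2 - C (v k ^ 2)).natDegree ≤ 2 := by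
          refine (natDegree_sub_le _ _).trans ?_
          simp
        simp only [natDegree_C, zero_add]
        exact this
      refine (Finset.sum_le_sum this).trans ?_
      rw [Finset.sum_const, smul_eq_mul]
      have : ((Finset.range m).erase j).card = m - 1 := by
        rw [Finset.card_erase_of_mem (Finset.mem_range.mpr (Finset.mem_range.mp hj))]
        simp
      rw [this]; ring_nf; omega
    calc (C (F.eval (v j) * (v j)⁻¹) * X *
        ∏ k ∈ (Finset.range m).erase j, (C ((v j ^ 2 - v k ^ 2)⁻¹) * (X ^ 2 - C (v k ^ 2)))).natDegree
        ≤ _ + _ := natDegree_mul_le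
      _ < 2 * m := by omega
  have hFH : F = H := by
    have hGdeg : (F - H).natDegree < 2 * m := lt_of_le_of_lt (natDegree_sub_le _ _) (by omega)
    have hzero : F - H = 0 := by
      set f : Fin (2 * m) → K := fun i => if (i : ℕ) < m then v i else -v ((i : ℕ) - m) with hf
      apply Polynomial.eq_zero_of_natDegree_lt_card_of_eval_eq_zero (f := f)
      · intro i j hij
        rw [hf] at hij
        simp only at hij
        have hi2 := i.2; have hj2 := j.2
        ext
        split_ifs at hij with h1 h2 h2
        · exact hinj _ h1 _ h2 hij
        · exact absurd hij (hne2 _ h1 _ (by omega))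
        · exact absurd hij.symm (hne2 _ h2 _ (by omega))
        · have := hinj _ (by omega : (i:ℕ) - m < m) _ (by omega : (j:ℕ) - m < m)
            (neg_injective hij)
          omega
      · intro i
        rw [hf]
        simp only
        rw [eval_sub]
        split_ifs with h1
        · rw [hHnode _ h1]; ring
        · have h2 : (i : ℕ) - m < m := by have := i.2; omega
          rw [hodd _ h2, hHodd]
          rw [hHnode _ h2]; ring
      · simpa using hGdeg
    linear_combination hzero
  conv_lhs => rw [hFH]
  exact hHeval a

lemma sign_prod (m j : ℕ) (hj : j < m) (f : ℕ → ℝ)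
    (hpos : ∀ k, k < j → 0 ≤ f k) (hneg : ∀ k, j < k → k < m → f k ≤ 0) :
    0 ≤ (-1:ℝ)^(m-1-j) * ∏ k ∈ (Finset.range m).erase j, f k := by
  have hsplit : (Finset.range m).erase j = Finset.range j ∪ Finset.Ico (j+1) m := by
    ext k; simp only [Finset.mem_erase, Finset.mem_range, Finset.mem_union, Finset.mem_Ico]; omega
  have hdisj : Disjoint (Finset.range j) (Finset.Ico (j+1) m) := by
    rw [Finset.disjoint_left]; intro k hk hk'
    simp only [Finset.mem_range] at hk; simp only [Finset.mem_Ico] at hk'; omega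
  rw [hsplit, Finset.prod_union hdisj]
  have hc : (Finset.Ico (j+1) m).card = m - 1 - j := by rw [Nat.card_Ico]; omega
  have hA : 0 ≤ ∏ k ∈ Finset.range j, f k :=
    Finset.prod_nonneg fun k hk => hpos k (mem_range.mp hk)
  have hB : 0 ≤ (-1:ℝ)^(m-1-j) * ∏ k ∈ Finset.Ico (j+1) m, f k := by
    have : ∏ k ∈ Finset.Ico (j+1) m, (-f k) = (-1:ℝ)^(m-1-j) * ∏ k ∈ Finset.Ico (j+1) m, f k := by
      rw [← hc]
      rw [show (fun k => -f k) = (fun k => (-1) * f k) by funext k; ring]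
      rw [Finset.prod_mul_distrib, Finset.prod_const]
    rw [← this]
    exact Finset.prod_nonneg fun k hk => by
      have := Finset.mem_Ico.mp hk; exact neg_nonneg.mpr (hneg k (by omega) this.2)
  calc (0:ℝ) ≤ ((-1:ℝ)^(m-1-j) * ∏ k ∈ Finset.Ico (j+1) m, f k) * ∏ k ∈ Finset.range j, f k :=
        mul_nonneg hB hA
    _ = (-1:ℝ)^(m-1-j) * ((∏ k ∈ Finset.range j, f k) * ∏ k ∈ Finset.Ico (j+1) m, f k) := by ring



/-- A polynomial over `ℂ` is an even function. -/
def IsEvenPoly (P : Polynomial ℂ) : Prop := ∀ x : ℂ, P.eval (-x) = P.eval x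

/-- A polynomial over `ℂ` is an odd function. -/
def IsOddPoly (P : Polynomial ℂ) : Prop := ∀ x : ℂ, P.eval (-x) = -P.eval x

/-- `P, Q ∈ ℂ[x]` form a Pell pair: fixed and opposite parity, and
`|P(x)|² + (1 - x²)|Q(x)|² = 1` on `[-1,1]`. -/
def PellPair (P Q : Polynomial ℂ) : Prop :=
  ((IsEvenPoly P ∧ IsOddPoly Q) ∨ (IsOddPoly P ∧ IsEvenPoly Q)) ∧
    ∀ x : ℝ, x ∈ Set.Icc (-1 : ℝ) 1 →
      ‖P.eval (x : ℂ)‖ ^ 2 + (1 - x ^ 2) * ‖Q.eval (x : ℂ)‖ ^ 2 = 1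

/-- A polynomial is Pellian if it is the first member of some Pell pair. -/
def Pellian (P : Polynomial ℂ) : Prop := ∃ Q : Polynomial ℂ, PellPair P Q

theorem pellian_ge_chebyshev_of_even (P : Polynomial ℂ) (hP : Pellian P)
    (d : ℕ) (hdeg : P.natDegree = d) (heven : Even d) (hd1 : 1 ≤ d)
    (a : ℝ) (ha : a ∈ Set.Icc (0 : ℝ) 1) (ha' : a ≤ Real.sin (Real.pi / (2 * d))) :
    |(Polynomial.Chebyshev.T ℝ d).eval a| ≤ ‖P.eval (a : ℂ)‖ := by
  obtain ⟨Q, hpar, hpell⟩ := hP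
  obtain ⟨m, hm2⟩ := heven
  have hm : 1 ≤ m := by omega
  have hd2m : d = 2 * m := by omega
  -- Q is odd
  have hQodd : ∀ x : ℂ, Q.eval (-x) = -Q.eval x := by
    rcases hpar with ⟨_, hQ⟩ | ⟨hPodd, _⟩
    · exact hQ
    · exfalso
      have hPne : P ≠ 0 := fun h => by simp [h] at hdeg; omega
      have := odd_natDegree_odd P hPodd hPne
      rw [hdeg] at this
      exact (Nat.not_odd_iff_even.mpr ⟨m, hm2⟩) this
  -- degree of Q
  have hQdeg : Q.natDegree < 2 * m := by
    have h1 := natDegree_Q_le P Q (pell_poly P Q hpell) (by omega)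
    omega
  -- angles and nodes
  have hdpos : (0:ℝ) < d := by positivity
  set θ : ℕ → ℝ := fun j => (2*(j:ℝ)+1) * Real.pi / (2*(d:ℝ)) with hθ
  set v : ℕ → ℝ := fun j => Real.cos (θ j) with hv
  have hθpos : ∀ j, 0 < θ j := by
    intro j; rw [hθ]; positivity
  have hθlt : ∀ j < m, θ j ≤ Real.pi/2 - Real.pi/(2*(d:ℝ)) := by
    intro j hj
    rw [hθ]
    rw [div_le_iff₀ (by positivity)]
    have hcast : (2*(j:ℝ)+1) ≤ (d:ℝ) - 1 := by
      have : (j:ℝ) ≤ (m:ℝ) - 1 := by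
        have : (j:ℝ) + 1 ≤ (m:ℝ) := by exact_mod_cast hj
        linarith
      have hdm : (d:ℝ) = 2*(m:ℝ) := by exact_mod_cast hd2m
      linarith
    have hpi : (0:ℝ) < Real.pi := Real.pi_pos
    have h2 : (Real.pi/2 - Real.pi/(2*(d:ℝ))) * (2*(d:ℝ)) = ((d:ℝ)-1) * Real.pi := by
      field_simp
    rw [h2]
    nlinarith
  have hθlt2 : ∀ j < m, θ j < Real.pi/2 := by
    intro j hj
    have := hθlt j hj
    have : Real.pi/(2*(d:ℝ)) > 0 := by positivity
    linarith [hθlt j hj]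
  have hvpos : ∀ j < m, 0 < v j := fun j hj =>
    Real.cos_pos_of_mem_Ioo ⟨by linarith [hθpos j, Real.pi_pos], hθlt2 j hj⟩
  have hv1 : ∀ j, v j ≤ 1 := fun j => Real.cos_le_one _
  have hsin : ∀ j < m, 0 < Real.sin (θ j) := by
    intro j hj
    apply Real.sin_pos_of_pos_of_lt_pi (hθpos j)
    linarith [hθlt2 j hj, Real.pi_pos]
  have hθmono : ∀ j k, j < k → θ j < θ k := by
    intro j k hjk
    rw [hθ]
    have hc : (2*(j:ℝ)+1) < (2*(k:ℝ)+1) := by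
      have : (j:ℝ) < (k:ℝ) := by exact_mod_cast hjk
      linarith
    have h2d : (0:ℝ) < 2*(d:ℝ) := by positivity
    exact div_lt_div_of_pos_right (by nlinarith [Real.pi_pos]) h2d
  have hvmono : ∀ j k, j < k → k < m → v k < v j := by
    intro j k hjk hkm
    apply Real.cos_lt_cos_of_nonneg_of_le_pi (le_of_lt (hθpos j))
    · linarith [hθlt2 k hkm, Real.pi_pos]
    · exact hθmono j k hjk
  -- a below all nodes
  have havm : a ≤ v (m-1) := by
    have hdm : (d:ℝ) = 2*(m:ℝ) := by exact_mod_cast hd2m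
    have hm1 : ((m-1 : ℕ):ℝ) = (m:ℝ) - 1 := by
      have h1 : (1:ℕ) ≤ m := hm
      push_cast [h1]
      ring
    have hθm1 : θ (m-1) = Real.pi/2 - Real.pi/(2*(d:ℝ)) := by
      rw [hθ]
      simp only [hm1, hdm]
      have hmne : (m:ℝ) ≠ 0 := by positivity
      field_simp
      ring
    show a ≤ Real.cos (θ (m-1))
    rw [hθm1, Real.cos_pi_div_two_sub]
    exact ha'
  have hav : ∀ j < m, a ≤ v j := by
    intro j hj
    rcases eq_or_lt_of_le (by omega : j ≤ m - 1) with h | h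
    · rw [h]; exact havm
    · exact le_of_lt (lt_of_le_of_lt havm (hvmono j (m-1) h (by omega)))
  have ha0 : 0 ≤ a := ha.1
  -- injectivity of nodes
  have hvinj : ∀ j < m, ∀ k < m, v j = v k → j = k := by
    intro j hj k hk h
    by_contra hne
    rcases Nat.lt_or_ge j k with h1 | h1
    · exact absurd h (ne_of_gt (hvmono j k h1 hk))
    · exact absurd h.symm (ne_of_gt (hvmono k j (by omega) hj))
  have hvne2 : ∀ j < m, ∀ k < m, v j ≠ -v k := by
    intro j hj k hk h
    nlinarith [hvpos j hj, hvpos k hk]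
  -- U polynomial facts
  set Upoly := Polynomial.Chebyshev.U ℝ ((d:ℤ)-1) with hU
  have hUdeg : Upoly.natDegree < 2*m := by
    have hcast : ((d:ℤ)-1) = ((d-1:ℕ):ℤ) := by omega
    rw [hU, hcast]
    exact lt_of_le_of_lt (natDegree_U_le (d-1)) (by omega)
  have hUcos : ∀ t : ℝ, Upoly.eval (Real.cos t) * Real.sin t = Real.sin ((d:ℝ) * t) := by
    intro t
    have h := Polynomial.Chebyshev.U_real_cos t ((d:ℤ)-1)
    rw [hU, h]
    norm_num
  have hUnode : ∀ j < m, Upoly.eval (v j) * Real.sin (θ j) = (-1:ℝ)^j := by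
    intro j hj
    rw [hUcos (θ j)]
    have harg : (d:ℝ) * θ j = (j:ℝ)*Real.pi + Real.pi/2 := by
      rw [hθ]
      have : (d:ℝ) ≠ 0 := by positivity
      field_simp
    rw [harg, Real.sin_add_pi_div_two]
    have := Real.cos_nat_mul_pi_sub 0 j
    simpa using this
  have hUodd : ∀ j < m, Upoly.eval (-v j) = -Upoly.eval (v j) := by
    intro j hj
    have h1 : -v j = Real.cos (Real.pi - θ j) := by rw [Real.cos_pi_sub]
    have h2 := hUcos (Real.pi - θ j)
    rw [← h1, Real.sin_pi_sub] at h2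
    have h3 : (d:ℝ) * (Real.pi - θ j) = (d:ℕ)*Real.pi - (d:ℝ)*θ j := by push_cast; ring
    rw [h3, Real.sin_nat_mul_pi_sub] at h2
    have h4 : ((-1:ℝ))^d = 1 := (Nat.even_iff.mpr (by omega)).neg_one_pow
    rw [h4, one_mul] at h2
    have h5 := hUcos (θ j)
    have hsj := hsin j hj
    exact mul_right_cancel₀ (ne_of_gt hsj) (by linear_combination h2 + h5)
  -- interpolation weights
  set W : ℕ → ℝ := fun j => (v j)⁻¹ * a *
      ∏ k ∈ (Finset.range m).erase j, ((v j ^ 2 - v k ^ 2)⁻¹ * (a ^ 2 - v k ^ 2)) with hW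
  -- interpolation for U
  have hUinterp : Upoly.eval a = ∑ j ∈ Finset.range m, Upoly.eval (v j) * W j := by
    have := odd_interp m v hvinj hvne2 Upoly hUdeg (fun j hj => hUodd j hj) a
    rw [this]
    refine Finset.sum_congr rfl fun j hj => ?_
    simp only [hW]
    ring
  -- interpolation for Q
  have hQinterp : Q.eval (a:ℂ) = ∑ j ∈ Finset.range m, Q.eval ((v j : ℝ):ℂ) * ((W j : ℝ):ℂ) := by
    have hinjC : ∀ j < m, ∀ k < m, ((v j :ℝ):ℂ) = ((v k:ℝ):ℂ) → j = k := by
      intro j hj k hk h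
      exact hvinj j hj k hk (by exact_mod_cast h)
    have hne2C : ∀ j < m, ∀ k < m, ((v j:ℝ):ℂ) ≠ -((v k:ℝ):ℂ) := by
      intro j hj k hk h
      exact hvne2 j hj k hk (by exact_mod_cast h)
    have := odd_interp m (fun j => ((v j : ℝ):ℂ)) hinjC hne2C Q hQdeg
      (fun j hj => hQodd ((v j : ℝ):ℂ)) (a:ℂ)
    rw [this]
    refine Finset.sum_congr rfl fun j hj => ?_
    simp only [hW]
    push_cast
    ring
  -- node bound for Q
  have hQnode : ∀ j < m, ‖Q.eval ((v j :ℝ):ℂ)‖ * Real.sin (θ j) ≤ 1 := by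
    intro j hj
    have hmem : v j ∈ Set.Icc (-1:ℝ) 1 := ⟨by linarith [hvpos j hj], hv1 j⟩
    have h := hpell (v j) hmem
    have hsq : 1 - (v j)^2 = Real.sin (θ j)^2 := by
      have := Real.sin_sq_add_cos_sq (θ j)
      show 1 - (Real.cos (θ j))^2 = _
      linarith
    have hPnn : 0 ≤ ‖P.eval ((v j :ℝ):ℂ)‖^2 := by positivity
    have h2 : Real.sin (θ j)^2 * ‖Q.eval ((v j :ℝ):ℂ)‖^2 ≤ 1 := by
      rw [← hsq]; linarith
    nlinarith [norm_nonneg (Q.eval ((v j :ℝ):ℂ)), hsin j hj,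
      sq_nonneg (‖Q.eval ((v j :ℝ):ℂ)‖ * Real.sin (θ j) - 1)]
  -- sign of weights
  have hWsign : ∀ j < m, |W j| = (-1:ℝ)^(m-1+j) * W j := by
    intro j hj
    have hsgn : 0 ≤ (-1:ℝ)^(m-1-j) * ∏ k ∈ (Finset.range m).erase j,
        ((v j ^ 2 - v k ^ 2)⁻¹ * (a ^ 2 - v k ^ 2)) := by
      apply sign_prod m j hj
      · intro k hkj
        have hkm : k < m := by omega
        have h1 : v j < v k := hvmono k j hkj hj
        have h2 : v j ^ 2 - v k ^ 2 < 0 := by nlinarith [hvpos j hj, hvpos k hkm]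
        have h3 : a ^ 2 - v k ^ 2 ≤ 0 := by nlinarith [hav k hkm, hvpos k hkm]
        have := mul_nonneg (le_of_lt (inv_pos.mpr (by linarith : (0:ℝ) < v k ^2 - v j ^2))) (by linarith : (0:ℝ) ≤ v k ^2 - a^2)
        calc (0:ℝ) ≤ (v k ^2 - v j ^2)⁻¹ * (v k ^2 - a^2) := this
          _ = (v j ^ 2 - v k ^ 2)⁻¹ * (a ^ 2 - v k ^ 2) := by
            rw [show v k ^2 - v j^2 = -(v j^2 - v k^2) by ring, inv_neg]
            ring
      · intro k hjk hkm
        have h1 : v k < v j := hvmono j k hjk hkm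
        have h2 : 0 < v j ^ 2 - v k ^ 2 := by nlinarith [hvpos k hkm, hvpos j hj]
        have h3 : a ^ 2 - v k ^ 2 ≤ 0 := by nlinarith [hav k hkm, hvpos k hkm]
        exact mul_nonpos_of_nonneg_of_nonpos (le_of_lt (inv_pos.mpr h2)) h3
    have hva : 0 ≤ (v j)⁻¹ * a := mul_nonneg (le_of_lt (inv_pos.mpr (hvpos j hj))) ha0
    have hWnn : 0 ≤ (-1:ℝ)^(m-1-j) * W j := by
      simp only [hW]
      calc (0:ℝ) ≤ ((v j)⁻¹ * a) * ((-1:ℝ)^(m-1-j) * ∏ k ∈ (Finset.range m).erase j,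
          ((v j ^ 2 - v k ^ 2)⁻¹ * (a ^ 2 - v k ^ 2))) := mul_nonneg hva hsgn
        _ = (-1:ℝ)^(m-1-j) * ((v j)⁻¹ * a * ∏ k ∈ (Finset.range m).erase j,
          ((v j ^ 2 - v k ^ 2)⁻¹ * (a ^ 2 - v k ^ 2))) := by ring
    have hexp : (-1:ℝ)^(m-1+j) = (-1:ℝ)^(m-1-j) := by
      have h1 : m-1+j = (m-1-j) + 2*j := by omega
      rw [h1, pow_add]
      simp [pow_mul]
    rw [hexp]
    have habs : |W j| = |(-1:ℝ)^(m-1-j) * W j| := by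
      simp [_root_.abs_mul, _root_.abs_pow]
    rw [habs, _root_.abs_of_nonneg hWnn]
  -- sum comparison
  set S : ℝ := ∑ j ∈ Finset.range m, (Real.sin (θ j))⁻¹ * |W j| with hS
  have habsQa : ‖Q.eval (a:ℂ)‖ ≤ S := by
    rw [hQinterp]
    refine le_trans (norm_sum_le _ _) ?_
    rw [hS]
    refine Finset.sum_le_sum fun j hj => ?_
    have hjm := Finset.mem_range.mp hj
    rw [norm_mul, Complex.norm_real, Real.norm_eq_abs]
    have h6 : ‖Q.eval ((v j :ℝ):ℂ)‖ ≤ (Real.sin (θ j))⁻¹ := by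
      rw [inv_eq_one_div, le_div_iff₀ (hsin j hjm)]
      exact hQnode j hjm
    exact mul_le_mul_of_nonneg_right h6 (abs_nonneg (W j))
  have hUS : (-1:ℝ)^(m-1) * Upoly.eval a = S := by
    rw [hUinterp, Finset.mul_sum, hS]
    refine Finset.sum_congr rfl fun j hj => ?_
    have hjm := Finset.mem_range.mp hj
    have hUval : Upoly.eval (v j) = (-1:ℝ)^j * (Real.sin (θ j))⁻¹ := by
      have hne := ne_of_gt (hsin j hjm)
      field_simp
      linear_combination hUnode j hjm
    rw [hWsign j hjm, hUval, pow_add]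
    ring
  have hSnn : 0 ≤ S := by
    rw [hS]
    exact Finset.sum_nonneg fun j hj => mul_nonneg
      (le_of_lt (inv_pos.mpr (hsin j (Finset.mem_range.mp hj)))) (abs_nonneg _)
  have hQU : ‖Q.eval (a:ℂ)‖ ≤ |Upoly.eval a| := by
    calc ‖Q.eval (a:ℂ)‖ ≤ S := habsQa
      _ = (-1:ℝ)^(m-1) * Upoly.eval a := hUS.symm
      _ ≤ |(-1:ℝ)^(m-1) * Upoly.eval a| := le_abs_self _
      _ = |Upoly.eval a| := by simp [_root_.abs_mul, _root_.abs_pow]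
  -- Chebyshev Pell identity at a
  set φ := Real.arccos a with hφ
  have hcos : Real.cos φ = a := Real.cos_arccos (by linarith [ha.1]) ha.2
  have hTa : (Polynomial.Chebyshev.T ℝ d).eval a = Real.cos ((d:ℝ) * φ) := by
    have := Polynomial.Chebyshev.T_real_cos φ (d:ℤ)
    rw [hcos] at this
    rw [this]
    norm_num
  have hUa : Upoly.eval a * Real.sin φ = Real.sin ((d:ℝ) * φ) := by
    have := hUcos φ
    rw [hcos] at this
    exact this
  have hsinφ : Real.sin φ ^ 2 = 1 - a^2 := by
    have := Real.sin_sq_add_cos_sq φ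
    rw [hcos] at this
    linarith
  have hTid : ((Polynomial.Chebyshev.T ℝ d).eval a)^2 + (1 - a^2) * (Upoly.eval a)^2 = 1 := by
    rw [hTa, ← hsinφ]
    have hpy := Real.sin_sq_add_cos_sq ((d:ℝ)*φ)
    linear_combination (Upoly.eval a * Real.sin φ + Real.sin ((d:ℝ)*φ)) * hUa + hpy
  -- Pell at a
  have hpa := hpell a ⟨by linarith [ha.1], ha.2⟩
  have h1a2 : 0 ≤ 1 - a^2 := by nlinarith [ha.1, ha.2]
  have hQsq : (‖Q.eval (a:ℂ)‖)^2 ≤ (Upoly.eval a)^2 := by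
    nlinarith [hQU, norm_nonneg (Q.eval (a:ℂ)), _root_.abs_nonneg (Upoly.eval a),
      sq_abs (Upoly.eval a)]
  have hfin : ((Polynomial.Chebyshev.T ℝ d).eval a)^2 ≤ (‖P.eval (a:ℂ)‖)^2 := by
    nlinarith [mul_le_mul_of_nonneg_left hQsq h1a2]
  nlinarith [sq_abs ((Polynomial.Chebyshev.T ℝ d).eval a), norm_nonneg (P.eval (a:ℂ)),
    _root_.abs_nonneg ((Polynomial.Chebyshev.T ℝ d).eval a), hfin]
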